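/- Let g(x₁,x₂) = (x₁² − 1)² + (x₁x₂ − 1)² and h(x₁,x₂) = (x₁² − 1)² + (x₂² − 1)² on ℝ². Then g⁻¹(0) ⊆ h⁻¹(0), yet there are no constants c > 0, α > 0, β > 0 such that |g(x)|^α + |g(x)|^β ≥ c|h(x)| for all x ∈ ℝ². (Indeed, g(1/k, k) → 1 and h(1/k, k) → +∞ as k → ∞.) -/

import Mathlib

open Filter Topology

noncomputable def gEx3 : ℝ × ℝ → ℝ := fun x => (x.1 ^ 2 - 1) ^ 2 + (x.1 * x.2 - 1) ^ 2

noncomputable def hEx3 : ℝ × ℝ → ℝ := fun x => (x.1 ^ 2 - 1) ^ 2 + (x.2 ^ 2 - 1) ^ 2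

lemma hEx3_tendsto :
    Tendsto (fun k : ℕ => hEx3 (1 / (k : ℝ), (k : ℝ))) atTop atTop := by
  have h1 : Tendsto (fun k : ℕ => ((k : ℝ) ^ 2 - 1) ^ 2) atTop atTop := by
    have hk2 : Tendsto (fun k : ℕ => (k : ℝ) ^ 2) atTop atTop :=
      (tendsto_pow_atTop two_ne_zero).comp tendsto_natCast_atTop_atTop
    have hsub : Tendsto (fun k : ℕ => (k : ℝ) ^ 2 - 1) atTop atTop := by
      simpa [sub_eq_add_neg] using tendsto_atTop_add_const_right atTop (-1 : ℝ) hk2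
    exact (tendsto_pow_atTop two_ne_zero).comp hsub
  refine tendsto_atTop_mono (fun k => ?_) h1
  have : (0:ℝ) ≤ ((1 / (k:ℝ)) ^ 2 - 1) ^ 2 := sq_nonneg _
  simp only [hEx3]
  nlinarith [sq_nonneg ((1 / (k:ℝ)) ^ 2 - 1)]

lemma gEx3_tendsto :
    Tendsto (fun k : ℕ => gEx3 (1 / (k : ℝ), (k : ℝ))) atTop (𝓝 1) := by
  have h0 : Tendsto (fun k : ℕ => 1 / (k : ℝ)) atTop (𝓝 0) :=
    tendsto_one_div_atTop_nhds_zero_nat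
  have hc : Continuous fun t : ℝ => (t ^ 2 - 1) ^ 2 := by continuity
  have h1 : Tendsto (fun k : ℕ => ((1 / (k : ℝ)) ^ 2 - 1) ^ 2) atTop (𝓝 1) := by
    have := (hc.tendsto 0).comp h0
    simp only [Function.comp_def] at this
    norm_num at this
    convert this using 2; norm_num
  refine h1.congr' ?_
  filter_upwards [eventually_ge_atTop 1] with k hk
  have hk0 : (k : ℝ) ≠ 0 := by positivity
  simp [gEx3, hk0]

theorem no_global_lojasiewicz_example :
    (∀ x : ℝ × ℝ, gEx3 x = 0 → hEx3 x = 0) ∧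
    (¬ ∃ c α β : ℝ, 0 < c ∧ 0 < α ∧ 0 < β ∧
      ∀ x : ℝ × ℝ, |gEx3 x| ^ α + |gEx3 x| ^ β ≥ c * |hEx3 x|) ∧
    Tendsto (fun k : ℕ => gEx3 (1 / (k : ℝ), (k : ℝ))) atTop (𝓝 1) ∧
    Tendsto (fun k : ℕ => hEx3 (1 / (k : ℝ), (k : ℝ))) atTop atTop := by
  refine ⟨?_, ?_, gEx3_tendsto, hEx3_tendsto⟩
  · intro x hx
    simp only [gEx3] at hx
    have h1 : (x.1 ^ 2 - 1) ^ 2 = 0 := by nlinarith [sq_nonneg (x.1 ^ 2 - 1), sq_nonneg (x.1 * x.2 - 1)]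
    have h2 : (x.1 * x.2 - 1) ^ 2 = 0 := by nlinarith [sq_nonneg (x.1 ^ 2 - 1), sq_nonneg (x.1 * x.2 - 1)]
    have e1 : x.1 ^ 2 = 1 := by nlinarith [pow_eq_zero_iff (n := 2) (M₀ := ℝ) (a := x.1 ^ 2 - 1) two_ne_zero]
    have e2 : x.1 * x.2 = 1 := by nlinarith [pow_eq_zero_iff (n := 2) (M₀ := ℝ) (a := x.1 * x.2 - 1) two_ne_zero]
    simp only [hEx3]
    have : x.2 ^ 2 = 1 := by nlinarith
    rw [e1, this]; ring
  · rintro ⟨c, α, β, hc, hα, hβ, H⟩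
    have ht := hEx3_tendsto
    have hev := ht.eventually_gt_atTop (2 / c)
    obtain ⟨k, hk1, hk2⟩ := (hev.and (eventually_ge_atTop 1)).exists
    set x : ℝ × ℝ := (1 / (k : ℝ), (k : ℝ))
    have hk0 : (1:ℝ) ≤ (k:ℝ) := by exact_mod_cast hk2
    have hg1 : |gEx3 x| ≤ 1 := by
      have hk0' : (k : ℝ) ≠ 0 := by linarith
      have hle : (0:ℝ) < 1 / (k:ℝ) ^ 2 := by positivity
      have hle2 : 1 / (k:ℝ) ^ 2 ≤ 1 := by
        rw [div_le_one (by positivity)]; nlinarith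
      have : gEx3 x = ((1 / (k:ℝ)) ^ 2 - 1) ^ 2 := by
        simp [gEx3, x, hk0']
      rw [this, abs_of_nonneg (sq_nonneg _)]
      rw [div_pow, one_pow]
      nlinarith
    have hg0 : (0:ℝ) ≤ |gEx3 x| := abs_nonneg _
    have hra : |gEx3 x| ^ α ≤ 1 := Real.rpow_le_one hg0 hg1 hα.le
    have hrb : |gEx3 x| ^ β ≤ 1 := Real.rpow_le_one hg0 hg1 hβ.le
    have hH := H x
    have hhpos : (0:ℝ) ≤ hEx3 x := by
      simp only [hEx3]; positivity
    rw [abs_of_nonneg hhpos] at hH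
    have : c * hEx3 x > c * (2 / c) := by
      exact (mul_lt_mul_iff_right₀ hc).mpr hk1
    rw [mul_div_cancel₀ _ hc.ne'] at this
    linarith
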